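/- Suppose lambda_k satisfies c1 k^{-2s} <= lambda_k <= c2 k^{-2s} for all k >= 1, with s > 1/2 and 0 < c1 <= c2. Then there exist constants 0 < A <= B such that for all sufficiently small rho > 0, A rho^{-1/s} <= sum_{k>=1} (lambda_k/(lambda_k + rho^2))^2 <= B rho^{-1/s}. -/

import Mathlib

open Finset

lemma summable_shift_rpow (p : ℝ) (hp : 1 < p) (N : ℕ) :
    Summable (fun k : ℕ => (((N + k : ℕ) : ℝ) + 1) ^ (-p)) := by
  have h0 : Summable (fun n : ℕ => (n : ℝ) ^ (-p)) :=
    Real.summable_nat_rpow.2 (by linarith)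
  have h1 := (summable_nat_add_iff (N + 1)).2 h0
  apply h1.congr
  intro k
  push_cast
  ring_nf

lemma tail_rpow_bound (p : ℝ) (hp : 1 < p) (N : ℕ) (hN : 1 ≤ N) :
    ∑' k : ℕ, (((N + k : ℕ) : ℝ) + 1) ^ (-p) ≤ (N : ℝ) ^ (1 - p) / (p - 1) := by
  have hN0 : (1 : ℝ) ≤ (N : ℝ) := by exact_mod_cast hN
  apply (summable_shift_rpow p hp N).tsum_le_of_sum_range_le
  intro n
  have hanti : AntitoneOn (fun x : ℝ => x ^ (-p)) (Set.Icc (N : ℝ) ((N : ℝ) + n)) := by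
    intro x hx y hy hxy
    exact Real.rpow_le_rpow_of_nonpos (lt_of_lt_of_le zero_lt_one (hN0.trans hx.1)) hxy
      (by linarith)
  have hint := hanti.sum_le_integral (x₀ := (N : ℝ)) (a := n)
  have hval : ∫ x in (N : ℝ)..((N : ℝ) + n), x ^ (-p)
      = (((N : ℝ) + n) ^ (-p + 1) - (N : ℝ) ^ (-p + 1)) / (-p + 1) := by
    apply integral_rpow
    right
    constructor
    · intro h; linarith
    · intro h
      rw [Set.mem_uIcc] at h
      rcases h with ⟨h1, _⟩ | ⟨_, h2⟩ <;> nlinarith [Nat.cast_nonneg (α := ℝ) n]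
  have hdiv : ∀ a b c : ℝ, (a - b) / (-c) = (b - a) / c := by
    intro a b c
    by_cases hc : c = 0
    · simp [hc]
    · rw [div_neg, ← neg_div, neg_sub]
  calc ∑ k ∈ range n, (((N + k : ℕ) : ℝ) + 1) ^ (-p)
      = ∑ k ∈ range n, (fun x : ℝ => x ^ (-p)) ((N : ℝ) + ((k : ℕ) + 1 : ℕ)) := by
        apply Finset.sum_congr rfl; intro k _; push_cast; ring_nf
    _ ≤ ∫ x in (N : ℝ)..((N : ℝ) + n), x ^ (-p) := hint
    _ = (((N : ℝ) + n) ^ (-p + 1) - (N : ℝ) ^ (-p + 1)) / (-p + 1) := hval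
    _ = ((N : ℝ) ^ (-p + 1) - ((N : ℝ) + n) ^ (-p + 1)) / (p - 1) := by
        rw [show (-p + 1 : ℝ) = -(p - 1) by ring, hdiv]
    _ ≤ (N : ℝ) ^ (1 - p) / (p - 1) := by
        rw [show (1 - p : ℝ) = -p + 1 by ring]
        gcongr
        have : (0:ℝ) ≤ ((N : ℝ) + n) ^ (-p + 1) := by positivity
        linarith

set_option maxHeartbeats 1000000 in
theorem variance_normalization_order
    (s c1 c2 : ℝ) (hs : 1 / 2 < s) (hc1 : 0 < c1) (hc12 : c1 ≤ c2)
    (lam : ℕ → ℝ)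
    (hlow : ∀ k : ℕ, c1 * ((k : ℝ) + 1) ^ (-(2 * s)) ≤ lam k)
    (hup : ∀ k : ℕ, lam k ≤ c2 * ((k : ℝ) + 1) ^ (-(2 * s))) :
    ∃ A B : ℝ, 0 < A ∧ A ≤ B ∧ ∃ ρ₀ : ℝ, 0 < ρ₀ ∧
      ∀ ρ : ℝ, 0 < ρ → ρ < ρ₀ →
        A * ρ ^ (-(1 / s)) ≤ (∑' k, (lam k / (lam k + ρ ^ 2)) ^ 2) ∧
        (∑' k, (lam k / (lam k + ρ ^ 2)) ^ 2) ≤ B * ρ ^ (-(1 / s)) := by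
  have hs0 : 0 < s := by linarith
  have hs' : s ≠ 0 := ne_of_gt hs0
  set c : ℝ := c1 ^ ((1:ℝ)/(2*s)) with hc
  have hcpos : 0 < c := Real.rpow_pos_of_pos hc1 _
  set A : ℝ := c / 8 with hA
  have hApos : 0 < A := by positivity
  set B : ℝ := max A (2 + c2^2/(4*s-1)) with hB
  have hc2 : 0 < c2 := lt_of_lt_of_le hc1 hc12
  refine ⟨A, B, hApos, le_max_left _ _, min 1 ((c/2) ^ s), ?_, ?_⟩
  · apply lt_min one_pos
    exact Real.rpow_pos_of_pos (by positivity) _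
  intro ρ hρ hρlt
  have hρ1 : ρ < 1 := lt_of_lt_of_le hρlt (min_le_left _ _)
  have hρ2 : ρ < (c/2) ^ s := lt_of_lt_of_le hρlt (min_le_right _ _)
  set r := ρ ^ (-(1/s)) with hr
  have hrpos : 0 < r := Real.rpow_pos_of_pos hρ _
  have hr1 : 1 < r := by
    rw [hr, Real.one_lt_rpow_iff_of_pos hρ]
    right
    exact ⟨hρ1, by simp; positivity⟩
  -- basic facts about f
  have hlampos : ∀ k, 0 < lam k := fun k => lt_of_lt_of_le (by positivity) (hlow k)
  have hρsq : (0:ℝ) < ρ^2 := by positivity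
  have hden : ∀ k, 0 < lam k + ρ^2 := fun k => by have := hlampos k; linarith
  set f := fun k => (lam k / (lam k + ρ^2))^2 with hf
  have hf0 : ∀ k, 0 ≤ f k := fun k => sq_nonneg _
  have hf1 : ∀ k, f k ≤ 1 := by
    intro k
    have h1 : lam k / (lam k + ρ^2) ≤ 1 := by
      rw [div_le_one (hden k)]; linarith
    have h0 : 0 ≤ lam k / (lam k + ρ^2) := le_of_lt (div_pos (hlampos k) (hden k))
    simp only [hf]; nlinarith
  have hfle : ∀ k, f k ≤ c2^2/ρ^4 * ((k:ℝ)+1)^(-(4*s)) := by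
    intro k
    have hb : (0:ℝ) < (k:ℝ)+1 := by positivity
    have h1 : lam k / (lam k + ρ^2) ≤ c2 * ((k:ℝ)+1)^(-(2*s)) / ρ^2 := by
      have h1a : lam k / (lam k + ρ^2) ≤ lam k / ρ^2 := by
        gcongr
        · exact (hlampos k).le
        · linarith [hlampos k]
      have h1b : lam k / ρ^2 ≤ c2 * ((k:ℝ)+1)^(-(2*s)) / ρ^2 := by
        gcongr
        exact hup k
      linarith
    have h0 : 0 ≤ lam k / (lam k + ρ^2) := le_of_lt (div_pos (hlampos k) (hden k))
    have h2 : f k ≤ (c2 * ((k:ℝ)+1)^(-(2*s)) / ρ^2)^2 := by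
      simp only [hf]; nlinarith
    have hy : (((k:ℝ)+1) ^ (-(2*s)))^2 = ((k:ℝ)+1) ^ (-(4*s)) := by
      rw [← Real.rpow_natCast (((k:ℝ)+1) ^ (-(2*s))) 2, ← Real.rpow_mul hb.le]
      norm_num
      ring_nf
    calc f k ≤ (c2 * ((k:ℝ)+1)^(-(2*s)) / ρ^2)^2 := h2
      _ = c2^2/ρ^4 * (((k:ℝ)+1) ^ (-(2*s)))^2 := by ring
      _ = c2^2/ρ^4 * ((k:ℝ)+1)^(-(4*s)) := by rw [hy]
  have hsum4 : Summable (fun k : ℕ => ((k:ℝ)+1)^(-(4*s))) := by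
    have h := summable_shift_rpow (4*s) (by linarith) 0
    apply h.congr
    intro k; simp
  have hsumf : Summable f :=
    Summable.of_nonneg_of_le hf0 hfle (hsum4.mul_left _)
  constructor
  · -- lower bound
    have hcr : 2 ≤ c * r := by
      have h1 : ((c/2)^s : ℝ) ^ (-(1/s)) < r := by
        rw [hr]
        exact Real.rpow_lt_rpow_of_neg hρ hρ2 (by simp; positivity)
      have h2 : ((c/2)^s : ℝ) ^ (-(1/s)) = 2 / c := by
        rw [← Real.rpow_mul (by positivity : (0:ℝ) ≤ c/2),
          show s * (-(1/s)) = -1 by field_simp, Real.rpow_neg_one, inv_div]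
      rw [h2] at h1
      have := (div_lt_iff₀ hcpos).1 h1
      linarith
    set M := ⌊c * r⌋₊ with hM
    have hMle : (M:ℝ) ≤ c * r := Nat.floor_le (by positivity)
    have hMge : c * r - 1 ≤ (M:ℝ) := le_of_lt (Nat.sub_one_lt_floor (c*r))
    have hMge2 : c * r / 2 ≤ (M:ℝ) := by linarith
    have hterm : ∀ k < M, (1:ℝ)/4 ≤ f k := by
      intro k hk
      have hb : (0:ℝ) < (k:ℝ)+1 := by positivity
      have hk1 : (k:ℝ) + 1 ≤ c * r := by
        have : ((k+1 : ℕ):ℝ) ≤ (M:ℝ) := by exact_mod_cast Nat.succ_le_of_lt hk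
        push_cast at this
        linarith
      have h2 : ((k:ℝ)+1) ^ (2*s) ≤ (c*r) ^ (2*s) :=
        Real.rpow_le_rpow hb.le hk1 (by positivity)
      have h3 : (c*r) ^ (2*s) = c1 * (ρ^2)⁻¹ := by
        rw [Real.mul_rpow hcpos.le hrpos.le, hc, ← Real.rpow_mul hc1.le, hr,
          ← Real.rpow_mul hρ.le, show 1/(2*s) * (2*s) = 1 by field_simp,
          show -(1/s) * (2*s) = -((2:ℕ):ℝ) by push_cast; field_simp,
          Real.rpow_one, Real.rpow_neg hρ.le, Real.rpow_natCast]
      rw [h3] at h2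
      have hx : (0:ℝ) < ((k:ℝ)+1)^(2*s) := Real.rpow_pos_of_pos hb _
      have h5 : ((k:ℝ)+1)^(2*s) * ρ^2 ≤ c1 := by
        have := mul_le_mul_of_nonneg_right h2 hρsq.le
        rwa [mul_assoc, inv_mul_cancel₀ (ne_of_gt hρsq), mul_one] at this
      have hlam : ρ^2 ≤ lam k := by
        have h6 : ρ^2 ≤ c1 * ((k:ℝ)+1)^(-(2*s)) := by
          rw [Real.rpow_neg hb.le, ← div_eq_mul_inv, le_div_iff₀ hx]
          nlinarith
        linarith [hlow k]
      have hhalf : 1/2 ≤ lam k / (lam k + ρ^2) := by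
        rw [le_div_iff₀ (hden k)]
        linarith
      show (1:ℝ)/4 ≤ (lam k / (lam k + ρ^2))^2
      calc (1:ℝ)/4 = (1/2)^2 := by norm_num
        _ ≤ (lam k / (lam k + ρ^2))^2 := by gcongr
    have hsum1 : (M:ℝ) * (1/4) ≤ ∑ k ∈ Finset.range M, f k := by
      calc (M:ℝ) * (1/4) = ∑ _k ∈ Finset.range M, (1:ℝ)/4 := by
            rw [Finset.sum_const, Finset.card_range]; simp [mul_comm]
        _ ≤ ∑ k ∈ Finset.range M, f k :=
            Finset.sum_le_sum fun k hk => hterm k (Finset.mem_range.1 hk)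
    have hsle := hsumf.sum_le_tsum (Finset.range M) (fun k _ => hf0 k)
    have hAr : A * r ≤ (M:ℝ) * (1/4) := by
      rw [hA]
      linarith [hMge2]
    calc A * r ≤ (M:ℝ) * (1/4) := hAr
      _ ≤ ∑ k ∈ Finset.range M, f k := hsum1
      _ ≤ ∑' k, f k := hsle
  · -- upper bound
    set N := ⌈r⌉₊ with hN
    have hN1 : 1 ≤ N := Nat.one_le_iff_ne_zero.2 (by
      have := Nat.ceil_pos.2 hrpos
      omega)
    have hNge : r ≤ (N:ℝ) := Nat.le_ceil r
    have hNle : (N:ℝ) ≤ 2 * r := by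
      have := Nat.ceil_lt_add_one hrpos.le
      linarith
    have hsplit := (hsumf.sum_add_tsum_nat_add N).symm
    have hhead : ∑ k ∈ Finset.range N, f k ≤ (N:ℝ) := by
      calc ∑ k ∈ Finset.range N, f k ≤ ∑ _k ∈ Finset.range N, (1:ℝ) :=
            Finset.sum_le_sum fun k _ => hf1 k
        _ = (N:ℝ) := by simp
    have htail : ∑' k, f (k + N) ≤ c2^2/ρ^4 * ((N:ℝ)^(1-4*s)/(4*s-1)) := by
      have hle2 : ∀ k, f (k + N) ≤ c2^2/ρ^4 * (((N + k : ℕ):ℝ)+1)^(-(4*s)) := by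
        intro k
        have h := hfle (k + N)
        rwa [show ((k + N :ℕ):ℝ) = ((N + k :ℕ):ℝ) by push_cast; ring] at h
      have hsumtail : Summable (fun k => c2^2/ρ^4 * (((N + k : ℕ):ℝ)+1)^(-(4*s))) :=
        (summable_shift_rpow (4*s) (by linarith) N).mul_left _
      have hsumftail : Summable (fun k => f (k + N)) := (summable_nat_add_iff N).2 hsumf
      have t1 : ∑' k, f (k + N) ≤ ∑' k, c2^2/ρ^4 * (((N + k : ℕ):ℝ)+1)^(-(4*s)) :=
        Summable.tsum_le_tsum hle2 hsumftail hsumtail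
      have t2 : ∑' k, (c2^2/ρ^4 * (((N + k : ℕ):ℝ)+1)^(-(4*s)))
          = c2^2/ρ^4 * ∑' k, (((N + k : ℕ):ℝ)+1)^(-(4*s)) := tsum_mul_left
      have t3 := tail_rpow_bound (4*s) (by linarith) N hN1
      have hnn : (0:ℝ) ≤ c2^2/ρ^4 := by positivity
      have t4 := mul_le_mul_of_nonneg_left t3 hnn
      rw [t2] at t1
      linarith
    have hNs : (N:ℝ)^(1-4*s) ≤ r^(1-4*s) :=
      Real.rpow_le_rpow_of_nonpos hrpos hNge (by linarith)
    have hrr : r ^ (1-4*s) = ρ^4 * r := by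
      rw [hr, ← Real.rpow_mul hρ.le,
        show -(1/s) * (1-4*s) = ((4:ℕ):ℝ) + -(1/s) by push_cast; field_simp; ring,
        Real.rpow_add hρ, Real.rpow_natCast]
    have htail2 : ∑' k, f (k + N) ≤ c2^2/(4*s-1) * r := by
      have h4s : (0:ℝ) < 4*s - 1 := by linarith
      have hρ4 : (0:ℝ) < ρ^4 := by positivity
      have u1 : c2^2/ρ^4 * ((N:ℝ)^(1-4*s)/(4*s-1)) ≤ c2^2/ρ^4 * (r^(1-4*s)/(4*s-1)) := by
        gcongr
      have u2 : c2^2/ρ^4 * (r^(1-4*s)/(4*s-1)) = c2^2/(4*s-1) * r := by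
        rw [hrr]; field_simp
      exact htail.trans (u1.trans (le_of_eq u2))
    have hBr : (2 + c2^2/(4*s-1)) * r ≤ B * r :=
      mul_le_mul_of_nonneg_right (le_max_right _ _) hrpos.le
    have hfinal : ∑' k, f k ≤ (2 + c2^2/(4*s-1)) * r := by
      rw [hsplit, show (2 + c2^2/(4*s-1)) * r = 2*r + c2^2/(4*s-1)*r by ring]
      exact add_le_add (hhead.trans hNle) htail2
    exact hfinal.trans hBr
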